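/- Let t ≥ 1 and m ≥ n ≥ 1 be integers, and define the strictly decreasing integer sequence c₁ > c₂ > … > c_{n+t−1} by c_i = m+t−1−i for 1 ≤ i ≤ t−1 and c_i = n+t−1−i for t ≤ i ≤ n+t−1 (i.e. the sequence m+t−2, m+t−3, …, m, n−1, n−2, …, 1, 0). Then ∏_{1≤i<j≤n+t−1} (c_i − c_j) · [∏_{i=m−n}^{m−1} i!] = [∏_{j=0}^{m−n−1} ∏_{i=0}^{n−1} (t+i+j)] · [∏_{i=1}^{n−1} i!] · [∏_{i=1}^{n+t−2} i!]. -/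

import Mathlib

open Finset in
private lemma aux_fac_prod (s c : ℕ) :
    s.factorial * ∏ j ∈ range c, (s + 1 + j) = (s + c).factorial := by
  induction c with
  | zero => simp
  | succ c ih =>
    rw [prod_range_succ, ← mul_assoc, ih, show s + (c + 1) = (s + c) + 1 from rfl,
      Nat.factorial_succ]
    ring

open Finset in
private lemma aux_reflect (n : ℕ) : ∏ i ∈ Icc 1 n, (n + 1 - i) = n.factorial := by
  rw [show Icc 1 n = Ico 1 (n+1) from rfl, prod_Ico_eq_prod_range]
  simp only [Nat.add_sub_cancel]
  rw [← Finset.prod_range_reflect (fun i => n + 1 - (1 + i)) n,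
    ← Finset.prod_range_add_one_eq_factorial]
  apply Finset.prod_congr rfl
  intro i hi
  simp only [mem_range] at hi
  omega

open Finset in
private lemma aux_vdm (n : ℕ) :
    (∏ i ∈ Icc 1 n, ∏ j ∈ Ioc i n, ((j : ℤ) - (i : ℤ)))
      = ∏ k ∈ Icc 1 (n - 1), (Nat.factorial k : ℤ) := by
  induction n with
  | zero => simp
  | succ n ih =>
    rw [Finset.prod_Icc_succ_top (by omega : 1 ≤ n + 1)]
    rw [show Ioc (n+1) (n+1) = ∅ from Finset.Ioc_self _, prod_empty, mul_one]
    have h1 : ∀ i ∈ Icc 1 n, (∏ j ∈ Ioc i (n+1), ((j : ℤ) - (i : ℤ)))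
        = (∏ j ∈ Ioc i n, ((j : ℤ) - (i : ℤ))) * ((n : ℤ) + 1 - (i : ℤ)) := by
      intro i hi
      simp only [mem_Icc] at hi
      rw [Finset.prod_Ioc_succ_top hi.2]
      push_cast; ring
    rw [Finset.prod_congr rfl h1, Finset.prod_mul_distrib, ih]
    have h2 : (∏ i ∈ Icc 1 n, ((n : ℤ) + 1 - (i : ℤ))) = (Nat.factorial n : ℤ) := by
      rw [← aux_reflect n]
      push_cast
      apply Finset.prod_congr rfl
      intro i hi
      simp only [mem_Icc] at hi
      push_cast [Nat.cast_sub (by omega : i ≤ n + 1)]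
      ring
    rw [h2]
    rcases Nat.eq_zero_or_pos n with h | h
    · subst h; simp
    · rw [show n + 1 - 1 = (n - 1) + 1 by omega, Finset.prod_Icc_succ_top (by omega),
        show n - 1 + 1 = n by omega]

open Finset in
private lemma aux_Q (n r : ℕ) (hn : 1 ≤ n) :
    (∏ i ∈ Icc r (n + r - 1), Nat.factorial i)
      = (∏ j ∈ range r, ∏ i ∈ range n, (1 + i + j)) * ∏ i ∈ Icc 1 (n - 1), Nat.factorial i := by
  induction r with
  | zero =>
    simp only [range_zero, prod_empty, one_mul, Nat.add_zero]
    rw [show Icc 0 (n - 1) = insert 0 (Ioc 0 (n-1)) from (Finset.Ioc_insert_left (by omega)).symm,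
      Finset.prod_insert (by simp), show Ioc 0 (n-1) = Icc 1 (n-1) from (Finset.Icc_add_one_left_eq_Ioc 0 _).symm]
    simp [Nat.factorial]
  | succ r ih =>
    have key : Nat.factorial r * ∏ i ∈ Icc (r+1) (n + (r+1) - 1), Nat.factorial i
        = (∏ i ∈ Icc r (n + r - 1), Nat.factorial i) * Nat.factorial (n + r) := by
      have e1 : Icc r (n + r) = insert r (Icc (r+1) (n+r)) := by
        rw [Finset.Icc_add_one_left_eq_Ioc, Finset.Ioc_insert_left (by omega)]
      have e2 : (∏ i ∈ Icc r (n + r), Nat.factorial i)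
          = (∏ i ∈ Icc r (n + r - 1), Nat.factorial i) * Nat.factorial (n + r) := by
        rw [show n + r = (n + r - 1) + 1 by omega, Finset.prod_Icc_succ_top (by omega),
          show n + r - 1 + 1 = n + r by omega]
      rw [show n + (r+1) - 1 = n + r by omega, ← e2, e1, Finset.prod_insert (by simp)]
    have h2 : (∏ i ∈ range n, (1 + i + r)) * Nat.factorial r = Nat.factorial (n + r) := by
      rw [show (∏ i ∈ range n, (1 + i + r)) = ∏ i ∈ range n, (r + 1 + i) by
        apply Finset.prod_congr rfl; intro i _; ring]
      rw [mul_comm, aux_fac_prod, Nat.add_comm]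
    apply Nat.eq_of_mul_eq_mul_left (Nat.factorial_pos r)
    rw [key, ih, prod_range_succ]
    calc (∏ j ∈ range r, ∏ i ∈ range n, (1 + i + j)) * (∏ i ∈ Icc 1 (n-1), Nat.factorial i)
          * Nat.factorial (n + r)
        = (∏ j ∈ range r, ∏ i ∈ range n, (1 + i + j)) * ((∏ i ∈ range n, (1 + i + r))
            * Nat.factorial r) * (∏ i ∈ Icc 1 (n-1), Nat.factorial i) := by rw [h2]; ring
      _ = _ := by ring

private def dd (n r t i : ℕ) : ℤ :=
  if i < t then ((n : ℤ) + r + t - 1 - i) else ((n : ℤ) + t - 1 - i)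

private lemma dd_def (n r t i : ℕ) : dd n r t i =
    if i < t then ((n : ℤ) + r + t - 1 - i) else ((n : ℤ) + t - 1 - i) := rfl

private lemma dd_shift (n r t i : ℕ) : dd n r (t+1) (i+1) = dd n r t i := by
  simp only [dd, Nat.add_lt_add_iff_right]
  split_ifs <;> push_cast <;> ring

open Finset in
private lemma aux_step (n r t : ℕ) (hn : 1 ≤ n) (ht : 1 ≤ t) :
    (∏ i ∈ Icc 1 (n + t), ∏ j ∈ Ioc i (n + t), (dd n r (t+1) i - dd n r (t+1) j))
      = ((Nat.factorial (t-1) : ℤ) * ∏ k ∈ range n, ((r + t + k : ℕ) : ℤ)) *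
        (∏ i ∈ Icc 1 (n + t - 1), ∏ j ∈ Ioc i (n + t - 1), (dd n r t i - dd n r t j)) := by
  rw [show Icc 1 (n+t) = insert 1 (Ioc 1 (n+t)) from (Finset.Ioc_insert_left (by omega)).symm,
    Finset.prod_insert (by simp)]
  congr 1
  · rw [← Finset.prod_Ioc_consecutive _ (ht : 1 ≤ t) (Nat.le_add_left t n)]
    congr 1
    · have h1 : ∀ j ∈ Ioc 1 t, dd n r (t+1) 1 - dd n r (t+1) j = ((j : ℤ) - 1) := by
        intro j hj
        simp only [mem_Ioc] at hj
        simp only [dd, if_pos (by omega : 1 < t + 1), if_pos (by omega : j < t + 1)]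
        ring
      rw [Finset.prod_congr rfl h1, show Ioc 1 t = Ico 2 (t+1) by
          rw [← Finset.Icc_add_one_left_eq_Ioc]; rfl,
        Finset.prod_Ico_eq_prod_range]
      rw [show t + 1 - 2 = t - 1 by omega, ← Finset.prod_range_add_one_eq_factorial (t-1)]
      push_cast
      apply Finset.prod_congr rfl
      intro k _
      push_cast; ring
    · have h1 : ∀ j ∈ Ioc t (n+t), dd n r (t+1) 1 - dd n r (t+1) j = ((r : ℤ) + j - 1) := by
        intro j hj
        simp only [mem_Ioc] at hj
        simp only [dd, if_pos (by omega : 1 < t + 1), if_neg (by omega : ¬ j < t + 1)]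
        ring
      rw [Finset.prod_congr rfl h1, show Ioc t (n+t) = Ico (t+1) (n+t+1) by
          rw [← Finset.Icc_add_one_left_eq_Ioc]; rfl,
        Finset.prod_Ico_eq_prod_range, show n + t + 1 - (t+1) = n by omega]
      apply Finset.prod_congr rfl
      intro k _
      push_cast; ring
  · have hmap : Ioc 1 (n+t) = (Icc 1 (n+t-1)).map (addRightEmbedding 1) := by
      rw [map_add_right_Icc, ← Finset.Icc_add_one_left_eq_Ioc]
      congr 1 <;> omega
    rw [hmap, Finset.prod_map]
    apply Finset.prod_congr rfl
    intro i hi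
    simp only [mem_Icc] at hi
    have hmap2 : Ioc (addRightEmbedding 1 i) (n+t) = (Ioc i (n+t-1)).map (addRightEmbedding 1) := by
      rw [map_add_right_Ioc]
      simp only [addRightEmbedding_apply]
      congr 1
      omega
    rw [hmap2, Finset.prod_map]
    apply Finset.prod_congr rfl
    intro j _
    simp only [addRightEmbedding_apply, dd_shift]

open Finset in
private lemma aux_perj (t n j : ℕ) :
    (∏ i ∈ range n, (t+1+i+j)) * (t+j) = (∏ i ∈ range n, (t+i+j)) * (t+n+j) := by
  have h1 : (∏ i ∈ range (n+1), (t+i+j)) = (∏ i ∈ range n, (t+1+i+j)) * (t+j) := by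
    rw [Finset.prod_range_succ']
    congr 1
    apply Finset.prod_congr rfl
    intro i _; ring
  rw [← h1, Finset.prod_range_succ]

open Finset in
private lemma aux_K (t n r : ℕ) (ht : 1 ≤ t) :
    Nat.factorial (t-1) * (∏ k ∈ range n, (r + t + k)) * (∏ j ∈ range r, (t + j))
      = (∏ j ∈ range r, (t + n + j)) * Nat.factorial (n + t - 1) := by
  have e1 : Nat.factorial (t-1) * (∏ j ∈ range r, (t + j)) = Nat.factorial (t - 1 + r) := by
    rw [← aux_fac_prod (t-1) r]
    congr 1
    apply Finset.prod_congr rfl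
    intro j _; omega
  have e2 : Nat.factorial (t - 1 + r) * (∏ k ∈ range n, (r + t + k))
      = Nat.factorial (t - 1 + r + n) := by
    rw [← aux_fac_prod (t-1+r) n]
    congr 1
    apply Finset.prod_congr rfl
    intro k _; omega
  have e3 : Nat.factorial (n + t - 1) * (∏ j ∈ range r, (t + n + j))
      = Nat.factorial (n + t - 1 + r) := by
    rw [← aux_fac_prod (n+t-1) r]
    congr 1
    apply Finset.prod_congr rfl
    intro j _; omega
  calc Nat.factorial (t-1) * (∏ k ∈ range n, (r + t + k)) * (∏ j ∈ range r, (t + j))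
      = Nat.factorial (t - 1 + r) * (∏ k ∈ range n, (r + t + k)) := by rw [← e1]; ring
    _ = Nat.factorial (t - 1 + r + n) := e2
    _ = Nat.factorial (n + t - 1 + r) := by congr 1; omega
    _ = _ := by rw [← e3]; ring

open Finset in
private lemma aux_main (n r : ℕ) (hn : 1 ≤ n) : ∀ t, 1 ≤ t →
    (∏ i ∈ Icc 1 (n + t - 1), ∏ j ∈ Ioc i (n + t - 1), (dd n r t i - dd n r t j)) *
        (∏ i ∈ Icc r (n + r - 1), (Nat.factorial i : ℤ))
      = (∏ j ∈ range r, ∏ i ∈ range n, ((t + i + j : ℕ) : ℤ)) *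
        (∏ i ∈ Icc 1 (n - 1), (Nat.factorial i : ℤ)) *
        (∏ i ∈ Icc 1 (n + t - 2), (Nat.factorial i : ℤ)) := by
  refine Nat.le_induction ?_ ?_
  · have hP : (∏ i ∈ Icc 1 (n + 1 - 1), ∏ j ∈ Ioc i (n + 1 - 1), (dd n r 1 i - dd n r 1 j))
        = ∏ k ∈ Icc 1 (n - 1), (Nat.factorial k : ℤ) := by
      rw [← aux_vdm n, show n + 1 - 1 = n from rfl]
      apply Finset.prod_congr rfl
      intro i hi
      simp only [mem_Icc] at hi
      apply Finset.prod_congr rfl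
      intro j hj
      simp only [mem_Ioc] at hj
      rw [dd_def, dd_def, if_neg (by omega), if_neg (by omega)]
      push_cast; ring
    have hQ : (∏ i ∈ Icc r (n + r - 1), (Nat.factorial i : ℤ))
        = (∏ j ∈ range r, ∏ i ∈ range n, ((1 + i + j : ℕ) : ℤ)) *
          (∏ i ∈ Icc 1 (n - 1), (Nat.factorial i : ℤ)) := by
      have := aux_Q n r hn
      have h2 := congrArg (fun x : ℕ => (x : ℤ)) this
      push_cast at h2 ⊢
      convert h2 using 2
    rw [hP, hQ, show n + 1 - 2 = n - 1 by omega]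
    ring
  · intro t ht ih
    rw [show n + (t+1) - 1 = n + t by omega, show n + (t+1) - 2 = n + t - 1 by omega,
      aux_step n r t hn ht, mul_assoc, ih]
    have hC : (∏ i ∈ Icc 1 (n + t - 1), (Nat.factorial i : ℤ))
        = (∏ i ∈ Icc 1 (n + t - 2), (Nat.factorial i : ℤ)) * ((Nat.factorial (n+t-1) : ℤ)) := by
      rw [show n + t - 1 = (n + t - 2) + 1 by omega, Finset.prod_Icc_succ_top (by omega),
        show n + t - 2 + 1 = n + t - 1 by omega]
    rw [hC]
    have hPr1 : (∏ j ∈ range r, ((t + j : ℕ) : ℤ)) ≠ 0 := by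
      apply Finset.prod_ne_zero_iff.2
      intro j _
      positivity
    have C1 : (∏ j ∈ range r, ∏ i ∈ range n, ((t + 1 + i + j : ℕ) : ℤ)) *
          (∏ j ∈ range r, ((t + j : ℕ) : ℤ))
        = (∏ j ∈ range r, ∏ i ∈ range n, ((t + i + j : ℕ) : ℤ)) *
          (∏ j ∈ range r, ((t + n + j : ℕ) : ℤ)) := by
      rw [← Finset.prod_mul_distrib, ← Finset.prod_mul_distrib]
      apply Finset.prod_congr rfl
      intro j _
      have := congrArg (fun x : ℕ => (x : ℤ)) (aux_perj t n j)
      push_cast at this ⊢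
      convert this using 2
    have C2 : ((Nat.factorial (t-1) : ℤ)) * (∏ k ∈ range n, ((r + t + k : ℕ) : ℤ)) *
          (∏ j ∈ range r, ((t + j : ℕ) : ℤ))
        = (∏ j ∈ range r, ((t + n + j : ℕ) : ℤ)) * ((Nat.factorial (n+t-1) : ℤ)) := by
      have := congrArg (fun x : ℕ => (x : ℤ)) (aux_K t n r ht)
      push_cast at this ⊢
      convert this using 2
    have key : ((Nat.factorial (t-1) : ℤ)) * (∏ k ∈ range n, ((r + t + k : ℕ) : ℤ)) *
          (∏ j ∈ range r, ∏ i ∈ range n, ((t + i + j : ℕ) : ℤ))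
        = (∏ j ∈ range r, ∏ i ∈ range n, ((t + 1 + i + j : ℕ) : ℤ)) *
          ((Nat.factorial (n+t-1) : ℤ)) := by
      apply mul_right_cancel₀ hPr1
      linear_combination (∏ j ∈ range r, ∏ i ∈ range n, ((t + i + j : ℕ) : ℤ)) * C2 -
        ((Nat.factorial (n+t-1) : ℤ)) * C1
    calc ((Nat.factorial (t-1) : ℤ) * ∏ k ∈ range n, ((r + t + k : ℕ) : ℤ)) *
          ((∏ j ∈ range r, ∏ i ∈ range n, ((t + i + j : ℕ) : ℤ)) *
            (∏ i ∈ Icc 1 (n - 1), (Nat.factorial i : ℤ)) *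
            (∏ i ∈ Icc 1 (n + t - 2), (Nat.factorial i : ℤ)))
        = (((Nat.factorial (t-1) : ℤ)) * (∏ k ∈ range n, ((r + t + k : ℕ) : ℤ)) *
            (∏ j ∈ range r, ∏ i ∈ range n, ((t + i + j : ℕ) : ℤ))) *
            ((∏ i ∈ Icc 1 (n - 1), (Nat.factorial i : ℤ)) *
            (∏ i ∈ Icc 1 (n + t - 2), (Nat.factorial i : ℤ))) := by ring
      _ = ((∏ j ∈ range r, ∏ i ∈ range n, ((t + 1 + i + j : ℕ) : ℤ)) *
            ((Nat.factorial (n+t-1) : ℤ))) *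
            ((∏ i ∈ Icc 1 (n - 1), (Nat.factorial i : ℤ)) *
            (∏ i ∈ Icc 1 (n + t - 2), (Nat.factorial i : ℤ))) := by rw [key]
      _ = _ := by ring

/-- **Proposition 4.3 (rank of `C_{mn}`).** Let `t ≥ 1`, `m ≥ n ≥ 1` and let
`c_i = m+t−1−i` for `1 ≤ i ≤ t−1`, `c_i = n+t−1−i` for `t ≤ i ≤ n+t−1`.  Then
`∏_{1≤i<j≤n+t−1} (c_i − c_j) · ∏_{i=m−n}^{m−1} i!
  = ∏_{j=0}^{m−n−1} ∏_{i=0}^{n−1} (t+i+j) · ∏_{i=1}^{n−1} i! · ∏_{i=1}^{n+t−2} i!`. -/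
theorem stmt_14 (t m n : ℕ) (ht : 1 ≤ t) (hn : 1 ≤ n) (hnm : n ≤ m)
    (c : ℕ → ℤ)
    (hc : ∀ i, c i = if i < t then (m : ℤ) + (t : ℤ) - 1 - (i : ℤ)
                     else (n : ℤ) + (t : ℤ) - 1 - (i : ℤ)) :
    (∏ i ∈ Finset.Icc 1 (n + t - 1), ∏ j ∈ Finset.Icc (i + 1) (n + t - 1), (c i - c j)) *
        (∏ i ∈ Finset.Icc (m - n) (m - 1), (Nat.factorial i : ℤ)) =
      (∏ j ∈ Finset.range (m - n), ∏ i ∈ Finset.range n, ((t + i + j : ℕ) : ℤ)) *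
        (∏ i ∈ Finset.Icc 1 (n - 1), (Nat.factorial i : ℤ)) *
        (∏ i ∈ Finset.Icc 1 (n + t - 2), (Nat.factorial i : ℤ)) := by
  obtain ⟨r, rfl⟩ := Nat.exists_eq_add_of_le hnm
  have hmn : n + r - n = r := by omega
  have hm1 : n + r - 1 = n + r - 1 := rfl
  rw [hmn]
  have e : (∏ i ∈ Finset.Icc 1 (n + t - 1), ∏ j ∈ Finset.Icc (i + 1) (n + t - 1), (c i - c j))
      = ∏ i ∈ Finset.Icc 1 (n + t - 1), ∏ j ∈ Finset.Ioc i (n + t - 1), (dd n r t i - dd n r t j) := by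
    apply Finset.prod_congr rfl
    intro i _
    rw [Finset.Icc_add_one_left_eq_Ioc]
    apply Finset.prod_congr rfl
    intro j _
    rw [hc i, hc j, dd_def, dd_def]
    split_ifs <;> push_cast <;> ring
  rw [e]
  exact aux_main n r hn t ht
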